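/- Let F : ℝ → ℝ be a cumulative distribution function, α ∈ (0,1), and q = F^{-1}(α) = inf{t ∈ ℝ : F(t) ≥ α}. Assume F is differentiable at q with F′(q) > 0. Let h : ℝ → ℝ be a bounded function which is continuous at q, let (t_n) be a sequence of nonzero reals with t_n → 0, and let (h_n) be bounded functions with sup_{t∈ℝ} |h_n(t) − h(t)| → 0, such that each F + t_n h_n is bounded with limits 0 at −∞ and 1 at +∞. Then ( (F + t_n h_n)^{-1}(α) − F^{-1}(α) ) / t_n → − h(q) / F′(q) as n → ∞. (That is, the quantile map φ_α(H) = H^{-1}(α) is Hadamard differentiable at F tangentially to the functions continuous at q, with derivative φ′_α(h) = −h(F^{-1}(α))/F′(F^{-1}(α)).) -/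

import Mathlib

open Filter

set_option maxHeartbeats 1000000 in
/-- Hadamard differentiability of the quantile map: if the cdf `F` is
differentiable at `q = F⁻¹(α)` with `F′(q) > 0`, `h` is bounded and continuous at `q`,
`tₙ ≠ 0`, `tₙ → 0`, `hₙ → h` uniformly with `hₙ` bounded, and each `F + tₙ hₙ` is
bounded with limits `0` at `−∞` and `1` at `+∞`, then
`((F + tₙ hₙ)⁻¹(α) − F⁻¹(α))/tₙ → −h(q)/F′(q)`. -/
theorem stmt17 (F : ℝ → ℝ) (hFmono : Monotone F)
    (hFrc : ∀ t, ContinuousWithinAt F (Set.Ici t) t)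
    (hF0 : Tendsto F atBot (nhds 0)) (hF1 : Tendsto F atTop (nhds 1))
    (α : ℝ) (hα : α ∈ Set.Ioo (0 : ℝ) 1)
    (q : ℝ) (hqdef : q = sInf {t : ℝ | α ≤ F t})
    (F' : ℝ) (hFderiv : HasDerivAt F F' q) (hF'pos : 0 < F')
    (h : ℝ → ℝ) (hhbdd : Bornology.IsBounded (Set.range h))
    (hhcont : ContinuousAt h q)
    (tn : ℕ → ℝ) (htn0 : ∀ n, tn n ≠ 0) (htn : Tendsto tn atTop (nhds 0))
    (hn : ℕ → ℝ → ℝ)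
    (hhnbdd : ∀ n, Bornology.IsBounded (Set.range (hn n)))
    (hunif : TendstoUniformly hn h atTop)
    (hpertbdd : ∀ n, Bornology.IsBounded (Set.range (fun t => F t + tn n * hn n t)))
    (hpert0 : ∀ n, Tendsto (fun t => F t + tn n * hn n t) atBot (nhds 0))
    (hpert1 : ∀ n, Tendsto (fun t => F t + tn n * hn n t) atTop (nhds 1)) :
    Tendsto (fun n =>
        (sInf {t : ℝ | α ≤ F t + tn n * hn n t} - q) / tn n)
      atTop (nhds (-(h q) / F')) := by
  obtain ⟨hα0, hα1⟩ := hα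
  have hF'ne : F' ≠ 0 := ne_of_gt hF'pos
  set c : ℝ := -h q / F' with hcdef
  have hcF' : F' * c = -h q := by rw [hcdef]; field_simp
  -- facts about S = {t | α ≤ F t}
  have hSne : Set.Nonempty {t : ℝ | α ≤ F t} := by
    obtain ⟨t, ht⟩ := (hF1.eventually_const_lt hα1).exists
    exact ⟨t, ht.le⟩
  have hSbdd : BddBelow {t : ℝ | α ≤ F t} := by
    obtain ⟨b, hb⟩ := eventually_atBot.mp (hF0.eventually_lt_const hα0)
    refine ⟨b, fun t ht => le_of_not_gt fun hlt => ?_⟩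
    exact absurd ht (not_le_of_gt (hb t hlt.le))
  have hFcont : ContinuousAt F q := hFderiv.continuousAt
  have hFq_ge : α ≤ F q := by
    have h1 : ∀ t ∈ Set.Ioi q, α ≤ F t := by
      intro t ht
      have ht' : sInf {t : ℝ | α ≤ F t} < t := by rw [← hqdef]; exact ht
      obtain ⟨s, hs, hst⟩ := exists_lt_of_csInf_lt hSne ht'
      exact hs.trans (hFmono hst.le)
    exact ge_of_tendsto hFcont.continuousWithinAt
      (eventually_nhdsWithin_of_forall h1)
  have hFq_le : F q ≤ α := by
    have h1 : ∀ t ∈ Set.Iio q, F t ≤ α := by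
      intro t ht
      have ht' : t < sInf {t : ℝ | α ≤ F t} := by rw [← hqdef]; exact ht
      have hnm := notMem_of_lt_csInf ht' hSbdd
      simp only [Set.mem_setOf_eq] at hnm
      exact le_of_not_ge hnm
    exact le_of_tendsto hFcont.continuousWithinAt
      (eventually_nhdsWithin_of_forall h1)
  have hFq : F q = α := le_antisymm hFq_le hFq_ge
  -- bound on h
  obtain ⟨M, hM⟩ := isBounded_iff_forall_norm_le.mp hhbdd
  have hMb : ∀ t, |h t| ≤ M := fun t => hM _ (Set.mem_range_self t)
  have hM0 : 0 ≤ M := (abs_nonneg _).trans (hMb q)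
  -- per-n sets
  have hSn_ne : ∀ n, Set.Nonempty {t : ℝ | α ≤ F t + tn n * hn n t} := by
    intro n
    obtain ⟨t, ht⟩ := ((hpert1 n).eventually_const_lt hα1).exists
    exact ⟨t, ht.le⟩
  have hSn_bdd : ∀ n, BddBelow {t : ℝ | α ≤ F t + tn n * hn n t} := by
    intro n
    obtain ⟨b, hb⟩ := eventually_atBot.mp ((hpert0 n).eventually_lt_const hα0)
    refine ⟨b, fun t ht => le_of_not_gt fun hlt => ?_⟩
    exact absurd ht (not_le_of_gt (hb t hlt.le))
  -- main estimate
  rw [Metric.tendsto_nhds]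
  intro ε hε
  have hε'pos : 0 < ε / 2 := half_pos hε
  set ε' : ℝ := ε / 2 with hε'def
  set K : ℝ := |c| + ε' with hKdef
  have hKpos : 0 < K := by positivity
  set η : ℝ := F' * ε' / (2 * K) with hηdef
  have hηpos : 0 < η := by positivity
  have hηK : η * K = F' * ε' / 2 := by rw [hηdef, div_mul_eq_mul_div, div_eq_div_iff (by positivity) (by norm_num)]; ring
  -- continuity of h at q
  obtain ⟨δ₂, hδ₂pos, hδ₂⟩ := Metric.continuousAt_iff.mp hhcont (F' * ε' / 8) (by positivity)
  -- derivative little-o bound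
  obtain ⟨δ₁, hδ₁pos, hδ₁⟩ := Metric.eventually_nhds_iff.mp
    ((hasDerivAt_iff_isLittleO.mp hFderiv).def hηpos)
  have hδ₁' : ∀ x : ℝ, |x - q| < δ₁ → |F x - α - (x - q) * F'| ≤ η * |x - q| := by
    intro x hx
    have := hδ₁ (show dist x q < δ₁ by simpa [Real.dist_eq] using hx)
    simpa [Real.norm_eq_abs, smul_eq_mul, hFq] using this
  -- γ
  have hγpos : 0 < α - F (q - δ₂) := by
    have h1 : q - δ₂ < sInf {t : ℝ | α ≤ F t} := by rw [← hqdef]; linarith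
    have h2 := notMem_of_lt_csInf h1 hSbdd
    have h3 : F (q - δ₂) < α := lt_of_not_ge h2
    linarith
  set γ : ℝ := α - F (q - δ₂) with hγdef
  -- eventually conditions
  set θ : ℝ := min (δ₁ / K) (min (δ₂ / K) (γ / (M + 1))) with hθdef
  have hθpos : 0 < θ := by
    refine lt_min (by positivity) (lt_min (by positivity) (by positivity))
  have E1 : ∀ᶠ n in atTop, |tn n| < θ := by
    have := Metric.tendsto_nhds.mp htn θ hθpos
    simpa [Real.dist_eq] using this
  have E2 : ∀ᶠ n in atTop, ∀ t, dist (h t) (hn n t) < F' * ε' / 8 :=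
    (Metric.tendstoUniformly_iff.mp hunif) _ (by positivity)
  have E3 : ∀ᶠ n in atTop, ∀ t, dist (h t) (hn n t) < 1 :=
    (Metric.tendstoUniformly_iff.mp hunif) _ one_pos
  filter_upwards [E1, E2, E3] with n h1 h2 h3
  set T : ℝ := |tn n| with hTdef
  have hTpos : 0 < T := abs_pos.mpr (htn0 n)
  have hKT1 : K * T < δ₁ := by
    have : T < δ₁ / K := lt_of_lt_of_le h1 (min_le_left _ _)
    calc K * T < K * (δ₁ / K) := by exact mul_lt_mul_of_pos_left this hKpos
    _ = δ₁ := by field_simp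
  have hKT2 : K * T < δ₂ := by
    have : T < δ₂ / K := lt_of_lt_of_le h1 ((min_le_right _ _).trans (min_le_left _ _))
    calc K * T < K * (δ₂ / K) := by exact mul_lt_mul_of_pos_left this hKpos
    _ = δ₂ := by field_simp
  have hTγ : T * (M + 1) < γ := by
    have hT : T < γ / (M + 1) := lt_of_lt_of_le h1 ((min_le_right _ _).trans (min_le_right _ _))
    have hM1 : (0:ℝ) < M + 1 := by linarith
    calc T * (M + 1) < (γ / (M + 1)) * (M + 1) := by exact mul_lt_mul_of_pos_right hT hM1
    _ = γ := by field_simp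
  -- bound on hn n near q
  have hn_near : ∀ t : ℝ, |t - q| < δ₂ → |hn n t - h q| < F' * ε' / 4 := by
    intro t ht
    have ha : |hn n t - h t| < F' * ε' / 8 := by
      have := h2 t; rw [Real.dist_eq, abs_sub_comm] at this; exact this
    have hb : |h t - h q| < F' * ε' / 8 := by
      have := hδ₂ (show dist t q < δ₂ by simpa [Real.dist_eq] using ht)
      rwa [Real.dist_eq] at this
    calc |hn n t - h q| ≤ |hn n t - h t| + |h t - h q| := abs_sub_le _ _ _
    _ < F' * ε' / 8 + F' * ε' / 8 := add_lt_add ha hb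
    _ = F' * ε' / 4 := by ring
  have hn_bdd : ∀ t : ℝ, |hn n t| ≤ M + 1 := by
    intro t
    have ha : |hn n t - h t| < 1 := by
      have := h3 t; rw [Real.dist_eq, abs_sub_comm] at this; exact this
    calc |hn n t| ≤ |h t| + |hn n t - h t| := by
          have := abs_add_le (h t) (hn n t - h t); simpa using this
    _ ≤ M + 1 := by linarith [hMb t]
  set u : ℝ := q + tn n * c + ε' * T with hudef
  set l : ℝ := q + tn n * c - ε' * T with hldef
  have htnc : |tn n * c| ≤ |c| * T := by
    rw [abs_mul]; rw [mul_comm]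
  have hu_close : |u - q| ≤ K * T := by
    have : u - q = tn n * c + ε' * T := by rw [hudef]; ring
    rw [this]
    calc |tn n * c + ε' * T| ≤ |tn n * c| + |ε' * T| := abs_add_le _ _
    _ ≤ |c| * T + ε' * T := by
        have : |ε' * T| = ε' * T := abs_of_nonneg (by positivity)
        rw [this]; linarith
    _ = K * T := by rw [hKdef]; ring
  have hl_close : |l - q| ≤ K * T := by
    have : l - q = tn n * c - ε' * T := by rw [hldef]; ring
    rw [this]
    calc |tn n * c - ε' * T| ≤ |tn n * c| + |ε' * T| := abs_sub _ _
    _ ≤ |c| * T + ε' * T := by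
        have : |ε' * T| = ε' * T := abs_of_nonneg (by positivity)
        rw [this]; linarith
    _ = K * T := by rw [hKdef]; ring
  -- upper bound: sInf Sₙ ≤ u
  have hub : sInf {t : ℝ | α ≤ F t + tn n * hn n t} ≤ u := by
    apply csInf_le (hSn_bdd n)
    show α ≤ F u + tn n * hn n u
    have hd : |F u - α - (u - q) * F'| ≤ η * |u - q| :=
      hδ₁' u (lt_of_le_of_lt hu_close hKT1)
    have hd2 : η * |u - q| ≤ F' * ε' / 2 * T := by
      calc η * |u - q| ≤ η * (K * T) := by
            exact mul_le_mul_of_nonneg_left hu_close hηpos.le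
      _ = F' * ε' / 2 * T := by rw [← mul_assoc, hηK]
    have huq : (u - q) * F' = -(tn n * h q) + F' * ε' * T := by
      have e1 : u - q = tn n * c + ε' * T := by rw [hudef]; ring
      have e2 : (tn n * c + ε' * T) * F' = tn n * (F' * c) + F' * ε' * T := by ring
      rw [e1, e2, hcF']; ring
    have hFu : F u ≥ α - tn n * h q + F' * ε' * T - F' * ε' / 2 * T := by
      have := abs_le.mp hd
      have h5 : η * |u - q| ≤ F' * ε' / 2 * T := hd2
      nlinarith [this.1, huq]
    have hhu : tn n * hn n u ≥ tn n * h q - T * (F' * ε' / 4) := by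
      have h6 : |hn n u - h q| < F' * ε' / 4 :=
        hn_near u (lt_of_le_of_lt hu_close hKT2)
      have h7 : |tn n * (hn n u - h q)| ≤ T * (F' * ε' / 4) := by
        rw [abs_mul]
        exact mul_le_mul_of_nonneg_left h6.le (abs_nonneg _)
      have h8 := (abs_le.mp h7).1
      nlinarith [h8]
    have hP : 0 < F' * ε' * T := by positivity
    linarith [hFu, hhu, hP]
  -- lower bound: l ≤ sInf Sₙ
  have hlb : l ≤ sInf {t : ℝ | α ≤ F t + tn n * hn n t} := by
    apply le_csInf (hSn_ne n)
    intro t ht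
    by_contra hcon
    push_neg at hcon
    have ht' : α ≤ F t + tn n * hn n t := ht
    rcases le_or_gt t (q - δ₂) with hcase | hcase
    · -- far case
      have hFt : F t ≤ F (q - δ₂) := hFmono hcase
      have hht : tn n * hn n t ≤ T * (M + 1) := by
        calc tn n * hn n t ≤ |tn n * hn n t| := le_abs_self _
        _ = T * |hn n t| := by rw [abs_mul]
        _ ≤ T * (M + 1) := mul_le_mul_of_nonneg_left (hn_bdd t) hTpos.le
      have : F t + tn n * hn n t < α := by
        have : F (q - δ₂) = α - γ := by rw [hγdef]; ring
        linarith [hTγ]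
      linarith
    · -- near case
      have htq : |t - q| < δ₂ := by
        have hl2 : l - q ≤ K * T := (le_abs_self _).trans hl_close
        rw [abs_lt]
        constructor
        · linarith
        · have : t < l := hcon
          have : t - q < K * T := by linarith
          linarith [hKT2]
      have hFt : F t ≤ F l := hFmono hcon.le
      have hd : |F l - α - (l - q) * F'| ≤ η * |l - q| :=
        hδ₁' l (lt_of_le_of_lt hl_close hKT1)
      have hd2 : η * |l - q| ≤ F' * ε' / 2 * T := by
        calc η * |l - q| ≤ η * (K * T) := mul_le_mul_of_nonneg_left hl_close hηpos.le
        _ = F' * ε' / 2 * T := by rw [← mul_assoc, hηK]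
      have hlq : (l - q) * F' = -(tn n * h q) - F' * ε' * T := by
        have e1 : l - q = tn n * c - ε' * T := by rw [hldef]; ring
        have e2 : (tn n * c - ε' * T) * F' = tn n * (F' * c) - F' * ε' * T := by ring
        rw [e1, e2, hcF']; ring
      have hFl : F l ≤ α - tn n * h q - F' * ε' * T + F' * ε' / 2 * T := by
        have := abs_le.mp hd
        nlinarith [this.2, hlq]
      have hht : tn n * hn n t ≤ tn n * h q + T * (F' * ε' / 4) := by
        have h6 : |hn n t - h q| < F' * ε' / 4 := hn_near t htq
        have h7 : |tn n * (hn n t - h q)| ≤ T * (F' * ε' / 4) := by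
          rw [abs_mul]
          exact mul_le_mul_of_nonneg_left h6.le (abs_nonneg _)
        have h8 := (abs_le.mp h7).2
        nlinarith [h8]
      have hP : 0 < F' * ε' * T := by positivity
      have : F t + tn n * hn n t < α := by linarith [hFl, hht, hP, hFt]
      linarith
  -- conclude
  rw [Real.dist_eq]
  have key : |sInf {t : ℝ | α ≤ F t + tn n * hn n t} - q - tn n * c| ≤ ε' * T := by
    rw [abs_le]
    constructor
    · have := hlb; rw [hldef] at this; linarith
    · have := hub; rw [hudef] at this; linarith
  have heq : (sInf {t : ℝ | α ≤ F t + tn n * hn n t} - q) / tn n - c =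
      (sInf {t : ℝ | α ≤ F t + tn n * hn n t} - q - tn n * c) / tn n := by
    rw [eq_div_iff (htn0 n), sub_mul, div_mul_cancel₀ _ (htn0 n)]; ring
  rw [heq, abs_div, ← hTdef]
  have h9 : |sInf {t : ℝ | α ≤ F t + tn n * hn n t} - q - tn n * c| / T ≤ ε' := by
    rw [div_le_iff₀ hTpos]; linarith [key]
  have h10 : ε' < ε := by rw [hε'def]; linarith
  linarith
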